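/- Let β > 0 be irrational. Then cos(X_b) + cos(βX_b) + cos((1+β)X_b), with X_b uniformly distributed on [0,b], converges in distribution as b → ∞ to cos(U₁) + cos(U₂) + cos(U₁+U₂), where U₁, U₂ are independent and uniformly distributed on [0,2π]; i.e., for every bounded continuous function f : ℝ → ℝ, (1/b)∫₀^b f(cos x + cos(βx) + cos((1+β)x)) dx → (1/(2π)²)∫₀^{2π}∫₀^{2π} f(cos u + cos v + cos(u+v)) du dv as b → ∞. (Equivalently, the limit law is that of cos(U₁−U₃) + cos(U₃−U₂) + cos(U₂−U₁) for any U₃ independent of U₁,U₂.) -/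

import Mathlib

open Real Filter MeasureTheory Set Submodule Algebra ContinuousMap Complex AddCircle
open scoped ComplexConjugate

noncomputable section

namespace WeylThreeCos

instance fact2pi : Fact (0 < 2 * π) := ⟨Real.two_pi_pos⟩

abbrev T2 := AddCircle (2 * π) × AddCircle (2 * π)

def char (p : ℤ × ℤ) : C(T2, ℂ) :=
  ((fourier p.1).comp ⟨Prod.fst, continuous_fst⟩) * ((fourier p.2).comp ⟨Prod.snd, continuous_snd⟩)

lemma char_apply (p : ℤ × ℤ) (q : T2) : char p q = fourier p.1 q.1 * fourier p.2 q.2 := rfl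

lemma char_coe (p : ℤ × ℤ) (x y : ℝ) :
    char p ((x : AddCircle (2*π)), (y : AddCircle (2*π))) =
      Complex.exp (Complex.I * ((p.1 : ℂ) * x + (p.2 : ℂ) * y)) := by
  rw [char_apply, fourier_coe_apply, fourier_coe_apply, ← Complex.exp_add]
  congr 1
  have h : ((2*π : ℝ) : ℂ) ≠ 0 := by
    simp [Real.pi_ne_zero]
  push_cast at h ⊢
  field_simp



lemma int_fourier (m : ℤ) :
    (∫ x : AddCircle (2*π), fourier m x) = if m = 0 then ((2*π : ℝ) : ℂ) else 0 := by
  rw [← AddCircle.intervalIntegral_preimage (2*π) 0, zero_add]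
  rcases eq_or_ne m 0 with rfl | hm
  · simp [fourier_zero]
  · rw [if_neg hm]
    have key : ∀ x : ℝ, fourier m (x : AddCircle (2*π)) = Complex.exp ((Complex.I * m) * x) := by
      intro x
      rw [fourier_coe_apply]
      congr 1
      have h : ((2*π : ℝ) : ℂ) ≠ 0 := by simp [Real.pi_ne_zero]
      push_cast at h ⊢
      field_simp
    simp_rw [key]
    rw [integral_exp_mul_complex (by simp [hm])]
    have : Complex.exp (Complex.I * m * ((2*π : ℝ) : ℂ)) = 1 := by
      have := Complex.exp_int_mul_two_pi_mul_I m
      rw [← this]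
      congr 1
      push_cast
      ring
    rw [this]
    simp



lemma theta_ne (β : ℝ) (hβ : Irrational β) (p : ℤ × ℤ) (hp : p ≠ 0) :
    (p.1 : ℝ) + p.2 * β ≠ 0 := by
  intro h
  rcases eq_or_ne p.2 0 with h2 | h2
  · have h1 : p.1 ≠ 0 := by
      intro h1; exact hp (Prod.ext h1 h2)
    rw [h2] at h
    simp at h
    exact h1 (by exact_mod_cast h)
  · apply hβ
    refine ⟨(-p.1 / p.2 : ℚ), ?_⟩
    have h2' : (p.2 : ℝ) ≠ 0 := by exact_mod_cast h2
    push_cast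
    field_simp
    linarith [h]

lemma avg_exp_tendsto_zero (θ : ℝ) (hθ : θ ≠ 0) :
    Tendsto (fun b : ℝ => (1/(b:ℂ)) * ∫ x in (0:ℝ)..b, Complex.exp ((Complex.I * θ) * x))
      atTop (nhds 0) := by
  have hc : (Complex.I * θ : ℂ) ≠ 0 := by simp [Complex.I_ne_zero, hθ]
  have key : ∀ b : ℝ, (∫ x in (0:ℝ)..b, Complex.exp ((Complex.I * θ) * x)) =
      (Complex.exp (Complex.I * θ * b) - 1) / (Complex.I * θ) := by
    intro b
    rw [integral_exp_mul_complex hc]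
    simp
  simp_rw [key]
  have hg : Tendsto (fun b : ℝ => (2 / ‖(Complex.I * θ : ℂ)‖) * (1/b)) atTop (nhds 0) := by
    have := tendsto_inv_atTop_zero (𝕜 := ℝ)
    simpa [one_div] using this.const_mul (2 / ‖(Complex.I * θ : ℂ)‖)
  refine squeeze_zero_norm' ?_ hg
  · filter_upwards [eventually_gt_atTop (0:ℝ)] with b hb
    rw [norm_mul, norm_div]
    have h1 : ‖(1/(b:ℂ))‖ = 1/b := by
      rw [norm_div, norm_one, Complex.norm_real]
      rw [Real.norm_of_nonneg hb.le]
    have h2 : ‖Complex.exp (Complex.I * θ * b) - 1‖ ≤ 2 := by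
      calc ‖Complex.exp (Complex.I * θ * b) - 1‖ ≤ ‖Complex.exp (Complex.I * θ * b)‖ + ‖(1:ℂ)‖ :=
            norm_sub_le _ _
        _ ≤ 2 := by
            have : ‖Complex.exp (Complex.I * θ * b)‖ = 1 := by
              rw [Complex.norm_exp]
              simp
            rw [this]; norm_num
    rw [norm_div, norm_one, Complex.norm_real, Real.norm_of_nonneg hb.le]
    have hne : (0:ℝ) < ‖(Complex.I * θ : ℂ)‖ := norm_pos_iff.mpr hc
    calc 1 / b * (‖cexp (Complex.I * θ * b) - 1‖ / ‖(Complex.I * θ : ℂ)‖)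
        ≤ 1 / b * (2 / ‖(Complex.I * θ : ℂ)‖) := by gcongr
      _ = 2 / ‖(Complex.I * θ : ℂ)‖ * (1 / b) := by ring


def avgC (β b : ℝ) (g : C(T2, ℂ)) : ℂ :=
  (1/(b:ℂ)) * ∫ x in (0:ℝ)..b, g ((x : AddCircle (2*π)), ((β*x : ℝ) : AddCircle (2*π)))

def meanC (g : C(T2, ℂ)) : ℂ := (1/((2*π : ℝ) : ℂ)^2) * ∫ p, g p

def WeylSet (β : ℝ) : Set C(T2, ℂ) :=
  {g | Tendsto (fun b => avgC β b g) atTop (nhds (meanC g))}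

lemma cont_path (β : ℝ) (g : C(T2, ℂ)) :
    Continuous fun x : ℝ => g ((x : AddCircle (2*π)), ((β*x : ℝ) : AddCircle (2*π))) := by
  apply g.continuous.comp
  exact (continuous_quotient_mk'.comp continuous_id).prodMk
    (continuous_quotient_mk'.comp (continuous_const.mul continuous_id))

lemma integrable_cm (g : C(T2, ℂ)) : Integrable g (volume : Measure T2) :=
  g.continuous.integrable_of_hasCompactSupport (HasCompactSupport.of_compactSpace _)

lemma meanC_char (p : ℤ × ℤ) : meanC (char p) = if p = 0 then 1 else 0 := by
  have : (∫ q : T2, char p q) =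
      (∫ x : AddCircle (2*π), fourier p.1 x) * ∫ x : AddCircle (2*π), fourier p.2 x := by
    simp_rw [char_apply]
    rw [Measure.volume_eq_prod, integral_prod_mul]
  rw [meanC, this, int_fourier, int_fourier]
  have h2π : ((2*π : ℝ) : ℂ) ≠ 0 := by simp [Real.pi_ne_zero]
  rcases eq_or_ne p 0 with rfl | hp
  · simp only [Prod.fst_zero, Prod.snd_zero, if_pos rfl, if_pos rfl]
    have hπ : ((π:ℝ):ℂ) ≠ 0 := by simp [Real.pi_ne_zero]
    push_cast
    field_simp
  · rcases eq_or_ne p.1 0 with h1 | h1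
    · have h2 : p.2 ≠ 0 := fun h2 => hp (Prod.ext h1 h2)
      simp [h1, h2, hp]
    · simp [h1, hp]

lemma char_mem (β : ℝ) (hβ : Irrational β) (p : ℤ × ℤ) : char p ∈ WeylSet β := by
  have key : ∀ b : ℝ, avgC β b (char p) =
      (1/(b:ℂ)) * ∫ x in (0:ℝ)..b,
        Complex.exp ((Complex.I * ((p.1 : ℝ) + p.2 * β : ℝ)) * x) := by
    intro b
    rw [avgC]
    congr 1
    apply intervalIntegral.integral_congr
    intro x _
    show char p (↑x, ↑(β*x)) = _
    rw [char_coe]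
    congr 1
    push_cast
    ring
  rw [WeylSet, Set.mem_setOf_eq]
  simp_rw [key, meanC_char]
  rcases eq_or_ne p 0 with rfl | hp
  · rw [if_pos rfl]
    simp only [Prod.fst_zero, Prod.snd_zero, Int.cast_zero, zero_mul, add_zero, zero_add,
      Complex.ofReal_zero, mul_zero, zero_mul, Complex.exp_zero]
    have : ∀ᶠ b : ℝ in atTop,
        (1:ℂ) = (1/(b:ℂ)) * ∫ _x in (0:ℝ)..b, (1:ℂ) := by
      filter_upwards [eventually_gt_atTop (0:ℝ)] with b hb
      have hb' : (b : ℂ) ≠ 0 := by exact_mod_cast hb.ne'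
      rw [intervalIntegral.integral_const]
      simp [hb']
    exact Tendsto.congr' this tendsto_const_nhds
  · rw [if_neg hp]
    exact avg_exp_tendsto_zero _ (theta_ne β hβ p hp)


lemma avgC_add (β b : ℝ) (g h : C(T2, ℂ)) :
    avgC β b (g + h) = avgC β b g + avgC β b h := by
  simp only [avgC, ContinuousMap.add_apply]
  rw [intervalIntegral.integral_add ((cont_path β g).intervalIntegrable _ _)
    ((cont_path β h).intervalIntegrable _ _)]
  ring

lemma avgC_smul (β b : ℝ) (c : ℂ) (g : C(T2, ℂ)) :
    avgC β b (c • g) = c * avgC β b g := by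
  simp only [avgC, ContinuousMap.smul_apply, smul_eq_mul]
  rw [intervalIntegral.integral_const_mul]
  ring

lemma meanC_add (g h : C(T2, ℂ)) : meanC (g + h) = meanC g + meanC h := by
  simp only [meanC, ContinuousMap.add_apply]
  rw [integral_add (integrable_cm g) (integrable_cm h)]
  ring

lemma meanC_smul (c : ℂ) (g : C(T2, ℂ)) : meanC (c • g) = c * meanC g := by
  simp only [meanC, ContinuousMap.smul_apply, smul_eq_mul]
  rw [integral_const_mul]
  ring

lemma zero_mem_weyl (β : ℝ) : (0 : C(T2, ℂ)) ∈ WeylSet β := by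
  have h0 : ∀ b : ℝ, avgC β b 0 = 0 := by
    intro b; simp [avgC]
  have h1 : meanC (0 : C(T2, ℂ)) = 0 := by simp [meanC]
  rw [WeylSet, Set.mem_setOf_eq, h1]
  simp_rw [h0]
  exact tendsto_const_nhds

lemma add_mem_weyl {β : ℝ} {g h : C(T2, ℂ)} (hg : g ∈ WeylSet β) (hh : h ∈ WeylSet β) :
    g + h ∈ WeylSet β := by
  rw [WeylSet, Set.mem_setOf_eq, meanC_add]
  simp_rw [avgC_add]
  exact hg.add hh

lemma smul_mem_weyl {β : ℝ} (c : ℂ) {g : C(T2, ℂ)} (hg : g ∈ WeylSet β) :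
    c • g ∈ WeylSet β := by
  rw [WeylSet, Set.mem_setOf_eq, meanC_smul]
  simp_rw [avgC_smul]
  exact hg.const_mul c

lemma span_subset_weyl (β : ℝ) (hβ : Irrational β) :
    (span ℂ (Set.range char) : Set C(T2, ℂ)) ⊆ WeylSet β := by
  intro g hg
  induction hg using Submodule.span_induction with
  | mem x hx => obtain ⟨p, rfl⟩ := hx; exact char_mem β hβ p
  | zero => exact zero_mem_weyl β
  | add x y _ _ hx hy => exact add_mem_weyl hx hy
  | smul c x _ hx => exact smul_mem_weyl c hx


lemma avgC_sub (β b : ℝ) (g h : C(T2, ℂ)) :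
    avgC β b (g - h) = avgC β b g - avgC β b h := by
  simp only [avgC, ContinuousMap.sub_apply]
  rw [intervalIntegral.integral_sub ((cont_path β g).intervalIntegrable _ _)
    ((cont_path β h).intervalIntegrable _ _)]
  ring

lemma meanC_sub (g h : C(T2, ℂ)) : meanC (g - h) = meanC g - meanC h := by
  simp only [meanC, ContinuousMap.sub_apply]
  rw [integral_sub (integrable_cm g) (integrable_cm h)]
  ring

lemma norm_avgC_le (β : ℝ) {b : ℝ} (hb : 0 < b) (g : C(T2, ℂ)) : ‖avgC β b g‖ ≤ ‖g‖ := by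
  rw [avgC, norm_mul]
  have h1 : ‖(1/(b:ℂ))‖ = 1/b := by
    rw [norm_div, norm_one, Complex.norm_real, Real.norm_of_nonneg hb.le]
  have h2 : ‖∫ x in (0:ℝ)..b, g ((x : AddCircle (2*π)), ((β*x : ℝ) : AddCircle (2*π)))‖
      ≤ ‖g‖ * |b - 0| :=
    intervalIntegral.norm_integral_le_of_norm_le_const fun x _ => g.norm_coe_le_norm _
  rw [h1]
  calc 1/b * ‖∫ x in (0:ℝ)..b, g ((x : AddCircle (2*π)), ((β*x : ℝ) : AddCircle (2*π)))‖
      ≤ 1/b * (‖g‖ * |b - 0|) := by gcongr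
    _ = ‖g‖ := by
        rw [sub_zero, abs_of_pos hb]
        field_simp

lemma volume_T2 : (volume (Set.univ : Set T2)).toReal = (2*π)^2 := by
  rw [Measure.volume_eq_prod, ← Set.univ_prod_univ, Measure.prod_prod,
    AddCircle.measure_univ, ← ENNReal.ofReal_mul Real.two_pi_pos.le,
    ENNReal.toReal_ofReal (by positivity)]
  ring

lemma norm_meanC_le (g : C(T2, ℂ)) : ‖meanC g‖ ≤ ‖g‖ := by
  rw [meanC, norm_mul]
  have h2 : ‖∫ p, g p‖ ≤ ‖g‖ * (volume (Set.univ : Set T2)).toReal :=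
    norm_integral_le_of_norm_le_const (Filter.Eventually.of_forall fun p => g.norm_coe_le_norm p)
  have h1 : ‖(1/((2*π : ℝ):ℂ)^2)‖ = 1/(2*π)^2 := by
    rw [norm_div, norm_one, norm_pow, Complex.norm_real,
      Real.norm_of_nonneg Real.two_pi_pos.le]
  rw [h1, volume_T2] at *
  calc 1/(2*π)^2 * ‖∫ p, g p‖ ≤ 1/(2*π)^2 * (‖g‖ * (2*π)^2) := by gcongr
    _ = ‖g‖ := by field_simp

lemma mem_weyl_of_approx (β : ℝ) (g : C(T2, ℂ))
    (h : ∀ ε > 0, ∃ h' ∈ WeylSet β, ‖g - h'‖ ≤ ε) : g ∈ WeylSet β := by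
  rw [WeylSet, Set.mem_setOf_eq, Metric.tendsto_atTop]
  intro ε hε
  obtain ⟨h', hh', hnorm⟩ := h (ε/4) (by positivity)
  obtain ⟨N, hN⟩ := Metric.tendsto_atTop.mp hh' (ε/4) (by positivity)
  refine ⟨max N 1, fun b hb => ?_⟩
  have hb1 : (0:ℝ) < b := lt_of_lt_of_le one_pos ((le_max_right N 1).trans hb)
  have h1 : dist (avgC β b g) (avgC β b h') ≤ ε/4 := by
    rw [dist_eq_norm, ← avgC_sub]
    exact (norm_avgC_le β hb1 _).trans hnorm
  have h2 : dist (avgC β b h') (meanC h') < ε/4 := hN b ((le_max_left N 1).trans hb)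
  have h3 : dist (meanC h') (meanC g) ≤ ε/4 := by
    rw [dist_eq_norm, ← meanC_sub]
    refine (norm_meanC_le _).trans ?_
    rw [← neg_sub, norm_neg]
    exact hnorm
  calc dist (avgC β b g) (meanC g)
      ≤ dist (avgC β b g) (avgC β b h') + dist (avgC β b h') (meanC h') +
        dist (meanC h') (meanC g) := dist_triangle4 _ _ _ _
    _ < ε/4 + ε/4 + ε/4 := by linarith
    _ < ε := by linarith


lemma char_mul (p q : ℤ × ℤ) : char p * char q = char (p + q) := by
  ext z
  simp only [ContinuousMap.mul_apply, char_apply, Prod.fst_add, Prod.snd_add, fourier_add]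
  ring

lemma char_zero_eq_one : char (0 : ℤ × ℤ) = 1 := by
  ext z
  simp [char_apply, fourier_zero]

lemma star_char (p : ℤ × ℤ) : star (char p) = char (-p) := by
  ext z
  simp only [ContinuousMap.star_apply, char_apply, Prod.fst_neg, Prod.snd_neg, fourier_neg]
  rw [RCLike.star_def, map_mul]

def weylAlg : StarSubalgebra ℂ C(T2, ℂ) where
  toSubalgebra := Algebra.adjoin ℂ (Set.range char)
  star_mem' := by
    show Algebra.adjoin ℂ (Set.range char) ≤ star (Algebra.adjoin ℂ (Set.range char))
    refine adjoin_le ?_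
    rintro - ⟨p, rfl⟩
    exact subset_adjoin ⟨-p, (star_char p).symm ▸ rfl⟩

lemma weylAlg_coe :
    Subalgebra.toSubmodule weylAlg.toSubalgebra = span ℂ (Set.range char) := by
  apply adjoin_eq_span_of_subset
  refine Subset.trans ?_ Submodule.subset_span
  intro x hx
  refine Submonoid.closure_induction (fun _ => id) ⟨0, char_zero_eq_one⟩ ?_ hx
  rintro - - - - ⟨p, rfl⟩ ⟨q, rfl⟩
  exact ⟨p + q, (char_mul p q).symm⟩

lemma weylAlg_separates : weylAlg.SeparatesPoints := by
  intro x y hxy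
  by_cases h1 : x.1 = y.1
  · have h2 : x.2 ≠ y.2 := fun h => hxy (Prod.ext h1 h)
    refine ⟨_, ⟨char (0, 1), subset_adjoin ⟨(0, 1), rfl⟩, rfl⟩, ?_⟩
    dsimp only
    rw [char_apply, char_apply]
    simp only [fourier_zero, fourier_one, one_mul]
    intro h
    rw [Circle.coe_inj] at h
    exact h2 (injective_toCircle Real.two_pi_pos.ne' h)
  · refine ⟨_, ⟨char (1, 0), subset_adjoin ⟨(1, 0), rfl⟩, rfl⟩, ?_⟩
    dsimp only
    rw [char_apply, char_apply]
    simp only [fourier_zero, fourier_one, mul_one]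
    intro h
    rw [Circle.coe_inj] at h
    exact h1 (injective_toCircle Real.two_pi_pos.ne' h)

lemma weylAlg_closure_eq_top : weylAlg.topologicalClosure = ⊤ :=
  ContinuousMap.starSubalgebra_topologicalClosure_eq_top_of_separatesPoints weylAlg
    weylAlg_separates

theorem weyl_equidistribution (β : ℝ) (hβ : Irrational β) (g : C(T2, ℂ)) :
    Tendsto (fun b => avgC β b g) atTop (nhds (meanC g)) := by
  have := mem_weyl_of_approx β g ?_
  · exact this
  intro ε hε
  have hg : g ∈ closure (weylAlg : Set C(T2, ℂ)) := by
    have : g ∈ weylAlg.topologicalClosure := by rw [weylAlg_closure_eq_top]; trivial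
    exact this
  obtain ⟨h, hh, hdist⟩ := Metric.mem_closure_iff.mp hg ε hε
  refine ⟨h, ?_, ?_⟩
  · apply span_subset_weyl β hβ
    have : h ∈ Subalgebra.toSubmodule weylAlg.toSubalgebra := hh
    rw [weylAlg_coe] at this
    exact this
  · rw [← dist_eq_norm]
    exact hdist.le


def cosL : AddCircle (2*π) → ℝ := Real.cos_periodic.lift

lemma cosL_coe (x : ℝ) : cosL (x : AddCircle (2*π)) = Real.cos x :=
  Real.cos_periodic.lift_coe x

lemma continuous_cosL : Continuous cosL := by
  rw [isQuotientMap_quotient_mk'.continuous_iff]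
  exact Real.continuous_cos

def gmap (f : ℝ → ℝ) (hf : Continuous f) : C(T2, ℂ) :=
  ⟨fun p => (f (cosL p.1 + cosL p.2 + cosL (p.1 + p.2)) : ℂ),
   Complex.continuous_ofReal.comp (hf.comp (((continuous_cosL.comp continuous_fst).add
     (continuous_cosL.comp continuous_snd)).add
     (continuous_cosL.comp (continuous_fst.add continuous_snd))))⟩

lemma gmap_coe (f : ℝ → ℝ) (hf : Continuous f) (x y : ℝ) :
    gmap f hf ((x : AddCircle (2*π)), (y : AddCircle (2*π))) =
      ((f (Real.cos x + Real.cos y + Real.cos (x + y)) : ℝ) : ℂ) := by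
  show ((f (cosL ↑x + cosL ↑y + cosL ((x : AddCircle (2*π)) + (y : AddCircle (2*π)))) : ℝ) : ℂ) = _
  have : ((x : AddCircle (2*π)) + (y : AddCircle (2*π))) = ((x + y : ℝ) : AddCircle (2*π)) := by
    norm_cast
  rw [this, cosL_coe, cosL_coe, cosL_coe]

lemma avgC_gmap (f : ℝ → ℝ) (hf : Continuous f) (β b : ℝ) :
    avgC β b (gmap f hf) =
      (((1 / b) * ∫ x in (0:ℝ)..b,
        f (Real.cos x + Real.cos (β * x) + Real.cos ((1 + β) * x)) : ℝ) : ℂ) := by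
  rw [avgC]
  have : ∀ x : ℝ, gmap f hf ((x : AddCircle (2*π)), ((β*x : ℝ) : AddCircle (2*π))) =
      ((f (Real.cos x + Real.cos (β * x) + Real.cos ((1 + β) * x)) : ℝ) : ℂ) := by
    intro x
    rw [gmap_coe]
    congr 3
    ring
  simp_rw [this]
  rw [intervalIntegral.integral_ofReal]
  push_cast
  ring

lemma meanC_gmap (f : ℝ → ℝ) (hf : Continuous f) :
    meanC (gmap f hf) =
      (((1 / (2 * π) ^ 2) * ∫ u in (0:ℝ)..(2 * π), ∫ v in (0:ℝ)..(2 * π),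
        f (Real.cos u + Real.cos v + Real.cos (u + v)) : ℝ) : ℂ) := by
  rw [meanC]
  have hint := integrable_cm (gmap f hf)
  rw [Measure.volume_eq_prod] at hint
  have h1 : (∫ p, gmap f hf p) = ∫ x : AddCircle (2*π), ∫ y : AddCircle (2*π),
      gmap f hf (x, y) := by
    rw [Measure.volume_eq_prod, MeasureTheory.integral_prod _ hint]
  rw [h1]
  have h2 : ∀ x : AddCircle (2*π), (∫ y : AddCircle (2*π), gmap f hf (x, y)) =
      ∫ v in (0:ℝ)..(2*π), gmap f hf (x, (v : AddCircle (2*π))) := by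
    intro x
    rw [← AddCircle.intervalIntegral_preimage (2*π) 0 (fun y => gmap f hf (x, y)), zero_add]
  simp_rw [h2]
  rw [← AddCircle.intervalIntegral_preimage (2*π) 0
    (fun x => ∫ v in (0:ℝ)..(2*π), gmap f hf (x, (v : AddCircle (2*π)))), zero_add]
  have h3 : ∀ u v : ℝ, gmap f hf ((u : AddCircle (2*π)), (v : AddCircle (2*π))) =
      ((f (Real.cos u + Real.cos v + Real.cos (u + v)) : ℝ) : ℂ) := gmap_coe f hf
  simp_rw [h3, intervalIntegral.integral_ofReal]
  push_cast
  ring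

end WeylThreeCos

end

/-- `cos(X_b)+cos(βX_b)+cos((1+β)X_b)` with `X_b` uniform on `[0,b]` converges in
distribution, as `b → ∞`, to `cos U₁ + cos U₂ + cos(U₁+U₂)` with `U₁,U₂` independent
uniform on `[0,2π]`, for irrational `β > 0`. -/
theorem sum_three_cosines_converges_in_distribution
    (β : ℝ) (hβpos : 0 < β) (hβirr : Irrational β)
    (f : ℝ → ℝ) (hf : Continuous f) (hbdd : ∃ C : ℝ, ∀ y : ℝ, |f y| ≤ C) :
    Tendsto (fun b : ℝ =>
        (1 / b) * ∫ x in (0:ℝ)..b,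
          f (Real.cos x + Real.cos (β * x) + Real.cos ((1 + β) * x)))
      atTop
      (nhds ((1 / (2 * π) ^ 2) *
        ∫ u in (0:ℝ)..(2 * π), ∫ v in (0:ℝ)..(2 * π),
          f (Real.cos u + Real.cos v + Real.cos (u + v)))) := by
  have H := WeylThreeCos.weyl_equidistribution β hβirr (WeylThreeCos.gmap f hf)
  simp_rw [WeylThreeCos.avgC_gmap f hf, WeylThreeCos.meanC_gmap f hf] at H
  have H2 := (Complex.continuous_re.tendsto _).comp H
  rw [show (1 / (2 * π) ^ 2 * ∫ u in (0:ℝ)..(2 * π), ∫ v in (0:ℝ)..(2 * π),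
      f (Real.cos u + Real.cos v + Real.cos (u + v)))
    = ((((1 / (2 * π) ^ 2 * ∫ u in (0:ℝ)..(2 * π), ∫ v in (0:ℝ)..(2 * π),
      f (Real.cos u + Real.cos v + Real.cos (u + v))) : ℝ) : ℂ)).re
    from (Complex.ofReal_re _).symm]
  exact H2.congr fun b => Complex.ofReal_re _
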